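/- Let G = A *_C B be an amalgamated free product of finite groups with C = S a common Sylow p-subgroup of both A and B (so p ∤ |A : S| and p ∤ |B : S|). Then S is a Sylow p-subgroup of G, i.e., every finite p-subgroup of G is conjugate to a subgroup of S. -/

import Mathlib

open Monoid PushoutI Function

namespace Stmt4Aux

open Monoid.CoprodI Monoid.PushoutI.NormalWord Subgroup.IsComplement

variable {C : Type*} {G : Bool → Type*} [Group C] [∀ i, Group (G i)]
  {φ : ∀ i, C →* G i} [∀ i, DecidableEq (G i)] (d : NormalWord.Transversal φ)

/-- vertex invariant word of `g` at index `i` -/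
noncomputable def T (i : Bool) (g : PushoutI φ) : Word G :=
  (NormalWord.equivPair i (NormalWord.equiv (d := d) g)).tail

/-- edge invariant word of `g` -/
noncomputable def WE (g : PushoutI φ) : Word G :=
  (NormalWord.equiv (d := d) g).toWord

theorem equiv_mul (x g : PushoutI φ) :
    NormalWord.equiv (d := d) (x * g) = x • (NormalWord.equiv (d := d) g) := by
  show (x * g) • (NormalWord.empty : NormalWord d) = _
  rw [mul_smul]
  rfl

theorem T_of_mul (i : Bool) (x : G i) (g : PushoutI φ) :
    T d i (of (φ := φ) i x * g) = T d i g := by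
  rw [T, T, equiv_mul, summand_smul_def, Equiv.apply_symm_apply]

theorem WE_base_mul (c : C) (g : PushoutI φ) : WE d (base φ c * g) = WE d g := by
  rw [WE, WE, equiv_mul, base_smul_def]

theorem prod_rcons' (i : Bool) (p : NormalWord.Pair d i) :
    (NormalWord.rcons i p).prod = of (φ := φ) i p.head * ofCoprodI p.tail.prod := by
  simp only [NormalWord.prod, NormalWord.rcons, Word.equivPair_symm, Word.prod_rcons,
    ← of_apply_eq_base φ i, MonoidHom.apply_ofInjective_symm]
  rw [map_mul, ofCoprodI_of, ← mul_assoc, ← map_mul, equiv_fst_mul_equiv_snd]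

theorem prod_equiv (g : PushoutI φ) : (NormalWord.equiv (d := d) g).prod = g :=
  NormalWord.equiv.symm_apply_apply g

theorem decompV (i : Bool) (g : PushoutI φ) :
    g = of (φ := φ) i ((NormalWord.equivPair i (NormalWord.equiv (d := d) g)).head) *
      ofCoprodI (T d i g).prod := by
  conv_lhs => rw [← prod_equiv d g,
    ← Equiv.symm_apply_apply (NormalWord.equivPair i) (NormalWord.equiv (d := d) g)]
  exact prod_rcons' d i _

theorem decompE (g : PushoutI φ) :
    g = base φ ((NormalWord.equiv (d := d) g).head) * ofCoprodI (WE d g).prod := by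
  conv_lhs => rw [← prod_equiv d g]
  rfl

theorem T_eq (i : Bool) (g : PushoutI φ) :
    T d i g = (Word.equivPair i (WE d g)).tail := by
  rw [T, WE]
  show (Word.equivPair i (CoprodI.of (φ i (NormalWord.equiv (d := d) g).head) •
    (NormalWord.equiv (d := d) g).toWord)).tail = _
  rw [Word.equivPair_smul_same]

theorem T_normalized (i : Bool) (g : PushoutI φ) :
    ∀ j x, ⟨j, x⟩ ∈ (T d i g).toList → x ∈ d.set j :=
  (NormalWord.equivPair i (NormalWord.equiv (d := d) g)).normalized

theorem T_fstIdx (i : Bool) (g : PushoutI φ) : (T d i g).fstIdx ≠ some i :=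
  (NormalWord.equivPair i (NormalWord.equiv (d := d) g)).fstIdx_ne

theorem equiv_ofCoprodI (w : Word G) (hw : ∀ j x, ⟨j, x⟩ ∈ w.toList → x ∈ d.set j) :
    NormalWord.equiv (d := d) (ofCoprodI w.prod) = ⟨w, 1, hw⟩ := by
  rw [Equiv.apply_eq_iff_eq_symm_apply]
  show _ = NormalWord.prod _
  simp [NormalWord.prod]

theorem WE_ofCoprodI (w : Word G) (hw : ∀ j x, ⟨j, x⟩ ∈ w.toList → x ∈ d.set j) :
    WE d (ofCoprodI w.prod) = w := by
  rw [WE, equiv_ofCoprodI d w hw]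


/-! ### Quotient level: vertices and edges of the Bass-Serre tree -/

set_option linter.unusedSectionVars false

variable (φ) in
abbrev R (i : Bool) : Subgroup (PushoutI φ) := (of (φ := φ) i).range

variable (φ) in
abbrev K : Subgroup (PushoutI φ) := (base φ).range

theorem KleR (i : Bool) : K φ ≤ R φ i := by
  rintro _ ⟨c, rfl⟩
  exact ⟨φ i c, of_apply_eq_base φ i c⟩

theorem T_coset (i : Bool) {x y : PushoutI φ} (h : x⁻¹ * y ∈ R φ i) :
    T d i x⁻¹ = T d i y⁻¹ := by
  obtain ⟨s, hs⟩ := h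
  have h1 : y⁻¹ = of (φ := φ) i s⁻¹ * x⁻¹ := by
    rw [map_inv, hs]; simp [mul_inv_rev, mul_assoc]
  rw [h1, T_of_mul]

theorem WE_coset {x y : PushoutI φ} (h : x⁻¹ * y ∈ K φ) :
    WE d x⁻¹ = WE d y⁻¹ := by
  obtain ⟨s, hs⟩ := h
  have h1 : y⁻¹ = base φ s⁻¹ * x⁻¹ := by
    rw [map_inv, hs]; simp [mul_inv_rev, mul_assoc]
  rw [h1, WE_base_mul]

noncomputable def tauV (i : Bool) (v : PushoutI φ ⧸ R φ i) : Word G :=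
  Quotient.liftOn' v (fun x => T d i x⁻¹) (fun x y h =>
    T_coset d i (QuotientGroup.leftRel_apply.1 h))

@[simp] theorem tauV_mk (i : Bool) (x : PushoutI φ) :
    tauV d i (x : PushoutI φ ⧸ R φ i) = T d i x⁻¹ := rfl

noncomputable def wEQ (e : PushoutI φ ⧸ K φ) : Word G :=
  Quotient.liftOn' e (fun x => WE d x⁻¹) (fun x y h =>
    WE_coset d (QuotientGroup.leftRel_apply.1 h))

@[simp] theorem wEQ_mk (x : PushoutI φ) :
    wEQ d (x : PushoutI φ ⧸ K φ) = WE d x⁻¹ := rfl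

theorem aux_cancel {Γ : Type*} [Group Γ] {x y A B z : Γ}
    (hx : x⁻¹ = A * z) (hy : y⁻¹ = B * z) : x⁻¹ * y = A * B⁻¹ := by
  rw [hx, ← inv_inv y, hy, mul_inv_rev]
  simp [mul_assoc]

theorem tauV_inj (i : Bool) {v v' : PushoutI φ ⧸ R φ i}
    (h : tauV d i v = tauV d i v') : v = v' := by
  induction v using QuotientGroup.induction_on with | H x =>
  induction v' using QuotientGroup.induction_on with | H y =>
  simp only [tauV_mk] at h
  rw [QuotientGroup.eq]
  have key := aux_cancel (by rw [← h]; exact decompV d i x⁻¹) (decompV d i y⁻¹)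
  rw [key, ← map_inv, ← map_mul]
  exact ⟨_, rfl⟩

theorem wEQ_inj {e e' : PushoutI φ ⧸ K φ}
    (h : wEQ d e = wEQ d e') : e = e' := by
  induction e using QuotientGroup.induction_on with | H x =>
  induction e' using QuotientGroup.induction_on with | H y =>
  simp only [wEQ_mk] at h
  rw [QuotientGroup.eq]
  have key := aux_cancel (by rw [← h]; exact decompE d x⁻¹) (decompE d y⁻¹)
  rw [key, ← map_inv, ← map_mul]
  exact ⟨_, rfl⟩

noncomputable def eEnd (i : Bool) : (PushoutI φ ⧸ K φ) → PushoutI φ ⧸ R φ i :=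
  Quotient.map' id (fun x y h =>
    QuotientGroup.leftRel_apply.2 (KleR i (QuotientGroup.leftRel_apply.1 h)))

@[simp] theorem eEnd_mk (i : Bool) (x : PushoutI φ) :
    eEnd (φ := φ) i (x : PushoutI φ ⧸ K φ) = (x : PushoutI φ ⧸ R φ i) := rfl

theorem eEnd_smul (i : Bool) (g : PushoutI φ) (e : PushoutI φ ⧸ K φ) :
    eEnd (φ := φ) i (g • e) = g • eEnd (φ := φ) i e := by
  induction e using QuotientGroup.induction_on with | H x => rfl

variable (φ) in
/-- vertices of the tree -/
abbrev Vtx : Type _ := Σ i : Bool, PushoutI φ ⧸ R φ i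

noncomputable instance : MulAction (PushoutI φ) (Vtx φ) where
  smul g v := ⟨v.1, g • v.2⟩
  one_smul v := by
    cases v with | mk i q =>
    show (⟨i, (1 : PushoutI φ) • q⟩ : Vtx φ) = ⟨i, q⟩
    rw [one_smul]
  mul_smul g h v := by
    cases v with | mk i q =>
    show (⟨i, (g * h) • q⟩ : Vtx φ) = ⟨i, g • h • q⟩
    rw [mul_smul]

@[simp] theorem smul_vtx_def (g : PushoutI φ) (i : Bool) (q : PushoutI φ ⧸ R φ i) :
    g • (⟨i, q⟩ : Vtx φ) = ⟨i, g • q⟩ := rfl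

@[simp] theorem smul_vtx_fst (g : PushoutI φ) (v : Vtx φ) : (g • v).1 = v.1 := rfl

noncomputable def tau (v : Vtx φ) : Word G := tauV d v.1 v.2

theorem vtx_ext {i : Bool} {q q' : PushoutI φ ⧸ R φ i}
    (h : tauV d i q = tauV d i q') : (⟨i, q⟩ : Vtx φ) = ⟨i, q'⟩ := by
  rw [tauV_inj d i h]

/-- the two ends of an edge -/
noncomputable def ends (i : Bool) (e : PushoutI φ ⧸ K φ) : Vtx φ := ⟨i, eEnd i e⟩

theorem ends_smul (i : Bool) (g : PushoutI φ) (e : PushoutI φ ⧸ K φ) :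
    ends i (g • e) = g • ends i e := by
  rw [ends, ends, eEnd_smul]; rfl

@[simp] theorem ends_fst (i : Bool) (e : PushoutI φ ⧸ K φ) : (ends (φ := φ) i e).1 = i := rfl

theorem tau_ends (i : Bool) (e : PushoutI φ ⧸ K φ) :
    tau d (ends i e) = (Word.equivPair i (wEQ d e)).tail := by
  induction e using QuotientGroup.induction_on with | H x =>
  show tauV d i (eEnd i (x : PushoutI φ ⧸ K φ)) = _
  rw [eEnd_mk, tauV_mk, wEQ_mk, T_eq]

theorem ends_inj (hphi : ∀ i, Function.Injective ⇑(φ i)) {e e' : PushoutI φ ⧸ K φ}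
    (h : ∀ i, ends (φ := φ) i e = ends i e') : e = e' := by
  induction e using QuotientGroup.induction_on with | H x =>
  induction e' using QuotientGroup.induction_on with | H y =>
  have h1 := h true
  have h2 := h false
  simp only [ends, eEnd_mk, Sigma.mk.inj_iff, heq_eq_eq, true_and] at h1 h2
  rw [QuotientGroup.eq] at h1 h2 ⊢
  have hKey : (of (φ := φ) true).range ⊓ (of (φ := φ) false).range = (base φ).range :=
    inf_of_range_eq_base_range hphi (show (true : Bool) ≠ false by decide)
  show x⁻¹ * y ∈ (base φ).range
  rw [← hKey]
  exact ⟨h1, h2⟩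

/-- the canonical edge below a vertex -/
noncomputable def edgeDown (v : Vtx φ) : PushoutI φ ⧸ K φ :=
  Quotient.liftOn' v.2
    (fun x => (((ofCoprodI (T d v.1 x⁻¹).prod)⁻¹ : PushoutI φ) : PushoutI φ ⧸ K φ))
    (fun x y h => congrArg
      (fun w : Word G => ((((ofCoprodI w.prod)⁻¹ : PushoutI φ)) : PushoutI φ ⧸ K φ))
      (T_coset d v.1 (QuotientGroup.leftRel_apply.1 h)))

@[simp] theorem edgeDown_mk (i : Bool) (x : PushoutI φ) :
    edgeDown d (⟨i, (x : PushoutI φ ⧸ R φ i)⟩ : Vtx φ) =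
      (((ofCoprodI (T d i x⁻¹).prod)⁻¹ : PushoutI φ) : PushoutI φ ⧸ K φ) := rfl

theorem wEQ_edgeDown (v : Vtx φ) : wEQ d (edgeDown d v) = tau d v := by
  cases v with | mk i q =>
  induction q using QuotientGroup.induction_on with | H x =>
  rw [edgeDown_mk, wEQ_mk, inv_inv]
  show WE d (ofCoprodI (T d i x⁻¹).prod) = tauV d i _
  rw [WE_ofCoprodI d _ (T_normalized d i x⁻¹), tauV_mk]

theorem aux2 {Γ : Type*} [Group Γ] {x A z : Γ} (hx : x⁻¹ = A * z) : z * x = A⁻¹ := by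
  have h : x = z⁻¹ * A⁻¹ := by rw [← mul_inv_rev, ← hx, inv_inv]
  rw [h, mul_inv_cancel_left]

theorem eEnd_edgeDown (i : Bool) (q : PushoutI φ ⧸ R φ i) :
    eEnd i (edgeDown d (⟨i, q⟩ : Vtx φ)) = q := by
  induction q using QuotientGroup.induction_on with | H x =>
  rw [edgeDown_mk, eEnd_mk, QuotientGroup.eq, inv_inv, aux2 (decompV d i x⁻¹), ← map_inv]
  exact ⟨_, rfl⟩

theorem ends_edgeDown_self (v : Vtx φ) : ends v.1 (edgeDown d v) = v := by
  cases v with | mk i q =>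
  show (⟨i, eEnd i (edgeDown d ⟨i, q⟩)⟩ : Vtx φ) = _
  rw [eEnd_edgeDown]


/-! ### Depth, root and parent -/

theorem fstIdx_eq_none_iff {w : Word G} : w.fstIdx = none ↔ w.toList = [] := by
  rcases w with ⟨l, h1, h2⟩
  cases l <;> simp [Word.fstIdx]

theorem word_eq_empty_of_toList {w : Word G} (h : w.toList = []) : w = Word.empty := by
  ext1
  simp [h, Word.empty]

theorem tail_of_ne (j : Bool) (w : Word G) (h : w.fstIdx ≠ some j) :
    (Word.equivPair j w).tail = w := by
  rw [Word.equivPair_eq_of_fstIdx_ne h]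

theorem tail_of_cons (j : Bool) (m : G j) (w' : Word G) (h1 : w'.fstIdx ≠ some j) (h2 : m ≠ 1) :
    (Word.equivPair j (Word.cons m w' h1 h2)).tail = w' := by
  rw [Word.cons_eq_smul, Word.equivPair_smul_same]
  show (Word.equivPair j w').tail = w'
  exact tail_of_ne j w' h1

/-- parity factor for the depth -/
def eparN (j : Bool) (l : ℕ) : ℕ := if (j = true ↔ l % 2 = 0) then 0 else 1

theorem eparN_flip (j : Bool) (l : ℕ) : eparN (!j) (l + 1) = eparN j l := by
  have h2 : (l + 1) % 2 = 0 ↔ ¬ (l % 2 = 0) := by omega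
  cases j <;> simp [eparN, h2]

noncomputable def Dep (v : Vtx φ) : ℕ :=
  (tau d v).toList.length + eparN v.1 (tau d v).toList.length

variable (φ) in
noncomputable def rootV : Vtx φ := ⟨true, ((1 : PushoutI φ) : PushoutI φ ⧸ R φ true)⟩

theorem equiv_one : NormalWord.equiv (d := d) (1 : PushoutI φ) = NormalWord.empty := by
  show ((1 : PushoutI φ) • NormalWord.empty : NormalWord d) = _
  rw [one_smul]

theorem WE_one : WE d (1 : PushoutI φ) = Word.empty := by
  rw [WE, equiv_one]
  rfl

theorem tau_root : tau d (rootV φ) = Word.empty := by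
  show tauV d true ((1 : PushoutI φ) : PushoutI φ ⧸ R φ true) = _
  rw [tauV_mk, inv_one, T_eq, WE_one,
    Word.equivPair_eq_of_fstIdx_ne (by simp [Word.fstIdx, Word.empty])]

theorem Dep_root : Dep d (rootV φ) = 0 := by
  rw [Dep, tau_root]
  simp [Word.empty, eparN, rootV]

theorem tau_fstIdx (v : Vtx φ) : (tau d v).fstIdx ≠ some v.1 := by
  cases v with | mk i q =>
  induction q using QuotientGroup.induction_on with | H x =>
  exact T_fstIdx d i x⁻¹

theorem eq_root (v : Vtx φ) (h1 : v.1 = true) (h2 : (tau d v).toList = []) : v = rootV φ := by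
  cases v with | mk i q =>
  cases h1
  have : tauV d true q = tauV d true ((1 : PushoutI φ) : PushoutI φ ⧸ R φ true) := by
    have hr := tau_root d (φ := φ)
    rw [rootV] at hr
    rw [show tauV d true q = tau d (⟨true, q⟩ : Vtx φ) from rfl,
        word_eq_empty_of_toList h2, ← hr]
    rfl
  exact vtx_ext d this

open scoped Classical in
noncomputable def par (v : Vtx φ) : Vtx φ :=
  if v = rootV φ then rootV φ else ends (!v.1) (edgeDown d v)

theorem par_root : par d (rootV φ) = rootV φ := by rw [par, if_pos rfl]

/-- adjacency of vertices -/
def Adj (u v : Vtx φ) : Prop := ∃ (e : PushoutI φ ⧸ K φ) (i : Bool),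
  u = ends i e ∧ v = ends (!i) e

theorem Adj.symm {u v : Vtx φ} (h : Adj u v) : Adj v u := by
  obtain ⟨e, i, hu, hv⟩ := h
  exact ⟨e, !i, hv, by rw [Bool.not_not]; exact hu⟩

theorem Adj.smul {u v : Vtx φ} (g : PushoutI φ) (h : Adj u v) : Adj (g • u) (g • v) := by
  obtain ⟨e, i, hu, hv⟩ := h
  exact ⟨g • e, i, by rw [hu, ends_smul], by rw [hv, ends_smul]⟩

theorem adj_par (v : Vtx φ) (hv : v ≠ rootV φ) : Adj (par d v) v := by
  refine ⟨edgeDown d v, !v.1, ?_, ?_⟩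
  · rw [par, if_neg hv]
  · rw [Bool.not_not, ends_edgeDown_self]

theorem par_spec (v : Vtx φ) (hv : v ≠ rootV φ) : Dep d (par d v) + 1 = Dep d v := by
  have hfst := tau_fstIdx d v
  have hedge : wEQ d (edgeDown d v) = tau d v := wEQ_edgeDown d v
  have hpar : par d v = ends (!v.1) (edgeDown d v) := by rw [par, if_neg hv]
  have htau : tau d (par d v) = (Word.equivPair (!v.1) (tau d v)).tail := by
    rw [hpar, tau_ends, hedge]
  rcases h : (tau d v).toList with _ | ⟨⟨j, m⟩, l⟩
  · -- tau v is empty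
    have hv1 : v.1 = false := by
      cases hb : v.1
      · rfl
      · exact absurd (eq_root d v hb h) hv
    have hemp : tau d v = Word.empty := word_eq_empty_of_toList h
    have htau2 : tau d (par d v) = Word.empty := by
      rw [htau, hemp, tail_of_ne _ _ (by simp [Word.fstIdx, Word.empty])]
    have hparfst : (par d v).1 = !v.1 := by rw [hpar]; rfl
    rw [Dep, Dep, htau2, hemp, hparfst, hv1]
    simp [eparN, Word.empty]
  · -- tau v = cons
    -- first letter has index j ≠ v.1
    have hj : j ≠ v.1 := fun hjv => hfst (by rw [Word.fstIdx, h]; simp [hjv])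
    -- reconstruct tau v as a cons
    have hm1 : m ≠ 1 := (tau d v).ne_one ⟨j, m⟩ (by rw [h]; exact List.mem_cons_self)
    have hchain := (tau d v).chain_ne
    rw [h] at hchain
    have hl1 : ∀ x ∈ l, Sigma.snd x ≠ 1 := fun x hx =>
      (tau d v).ne_one x (by rw [h]; exact List.mem_cons_of_mem _ hx)
    let w' : Word G := ⟨l, hl1, hchain.tail⟩
    have hw'fst : w'.fstIdx ≠ some j := by
      rcases l with _ | ⟨⟨j', m'⟩, l'⟩
      · simp [w', Word.fstIdx]
      · have : j ≠ j' := (List.isChain_cons.1 hchain).1 _ rfl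
        simp only [w', Word.fstIdx, List.head?_cons, Option.map_some]
        intro hc
        exact this (by injection hc with hc'; exact hc'.symm)
    have hcons : tau d v = Word.cons m w' hw'fst hm1 := by
      ext1
      rw [h]
      rfl
    have hjv : j = !v.1 := by
      cases hb : v.1 <;> cases hcj : j <;> simp_all
    have htau2 : tau d (par d v) = w' := by
      rw [htau, hcons, ← hjv, tail_of_cons]
    have hparfst : (par d v).1 = !v.1 := by rw [hpar]; rfl
    have hlen : (tau d v).toList.length = w'.toList.length + 1 := by rw [h]; rfl
    have h2 := eparN_flip (!v.1) w'.toList.length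
    rw [Bool.not_not] at h2
    rw [Dep, Dep, htau2, hparfst, hlen, ← hjv, hjv, h2]
    omega


/-! ### Classification of the ends of an edge -/

theorem Dep_ends_empty (e : PushoutI φ ⧸ K φ) (h : (wEQ d e).toList = []) (b : Bool) :
    tau d (ends b e) = wEQ d e := by
  rw [tau_ends, tail_of_ne]
  rw [fstIdx_eq_none_iff.2 h]
  simp

theorem edge_classify (e : PushoutI φ ⧸ K φ) :
    ∃ i : Bool, Dep d (ends i e) + 1 = Dep d (ends (!i) e) ∧
      ends (φ := φ) (!i) e ≠ rootV φ ∧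
      edgeDown d (ends (!i) e) = e ∧
      par d (ends (!i) e) = ends i e := by
  rcases h : (wEQ d e).toList with _ | ⟨⟨j, m⟩, l⟩
  · -- empty edge word
    refine ⟨true, ?_, ?_, ?_, ?_⟩
    · have h1 := Dep_ends_empty d e h true
      have h2 := Dep_ends_empty d e h false
      simp only [Bool.not_true]
      rw [Dep, Dep, h1, h2, h]
      simp [eparN]
    · intro hc
      have : Dep d (ends (φ := φ) (!true) e) = 0 := by rw [hc, Dep_root]
      simp only [Bool.not_true] at this
      rw [Dep, Dep_ends_empty d e h, h] at this
      simp [eparN] at this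
    · apply wEQ_inj
      rw [wEQ_edgeDown]
      exact Dep_ends_empty d e h _
    · have hne : ends (φ := φ) (!true) e ≠ rootV φ := by
        intro hc
        have : Dep d (ends (φ := φ) (!true) e) = 0 := by rw [hc, Dep_root]
        simp only [Bool.not_true] at this
        rw [Dep, Dep_ends_empty d e h, h] at this
        simp [eparN] at this
      rw [par, if_neg hne]
      have hE : edgeDown d (ends (φ := φ) (!true) e) = e := by
        apply wEQ_inj
        rw [wEQ_edgeDown]
        exact Dep_ends_empty d e h _
      rw [hE]
      rfl
  · -- cons case
    have hm1 : m ≠ 1 := (wEQ d e).ne_one ⟨j, m⟩ (by rw [h]; exact List.mem_cons_self)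
    have hchain := (wEQ d e).chain_ne
    rw [h] at hchain
    have hl1 : ∀ x ∈ l, Sigma.snd x ≠ 1 := fun x hx =>
      (wEQ d e).ne_one x (by rw [h]; exact List.mem_cons_of_mem _ hx)
    let w' : Word G := ⟨l, hl1, hchain.tail⟩
    have hw'fst : w'.fstIdx ≠ some j := by
      rcases l with _ | ⟨⟨j', m'⟩, l'⟩
      · simp [w', Word.fstIdx]
      · have : j ≠ j' := (List.isChain_cons.1 hchain).1 _ rfl
        simp only [w', Word.fstIdx, List.head?_cons, Option.map_some]
        intro hc
        exact this (by injection hc with hc'; exact hc'.symm)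
    have hcons : wEQ d e = Word.cons m w' hw'fst hm1 := by
      ext1
      rw [h]
      rfl
    have hfst : (wEQ d e).fstIdx = some j := by rw [Word.fstIdx, h]; rfl
    have htj : tau d (ends j e) = w' := by
      rw [tau_ends, hcons, tail_of_cons]
    have htnj : tau d (ends (!j) e) = wEQ d e := by
      rw [tau_ends, tail_of_ne]
      rw [hfst]
      simp
    have hlen : (wEQ d e).toList.length = w'.toList.length + 1 := by rw [h]; rfl
    have hDj : Dep d (ends (φ := φ) j e) = w'.toList.length + eparN j w'.toList.length := by
      rw [Dep, htj]; rfl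
    have hDnj : Dep d (ends (φ := φ) (!j) e) =
        w'.toList.length + 1 + eparN (!j) (w'.toList.length + 1) := by
      rw [Dep, htnj, hlen]; rfl
    have hDrel : Dep d (ends (φ := φ) j e) + 1 = Dep d (ends (φ := φ) (!j) e) := by
      rw [hDj, hDnj, eparN_flip]
      omega
    have hne : ends (φ := φ) (!j) e ≠ rootV φ := by
      intro hc
      have h0 : Dep d (ends (φ := φ) (!j) e) = 0 := by rw [hc, Dep_root]
      omega
    have hE : edgeDown d (ends (φ := φ) (!j) e) = e := by
      apply wEQ_inj
      rw [wEQ_edgeDown, htnj]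
    refine ⟨j, hDrel, hne, hE, ?_⟩
    rw [par, if_neg hne]
    show ends (!(ends (φ := φ) (!j) e).1) (edgeDown d (ends (!j) e)) = _
    rw [hE, ends_fst, Bool.not_not]

theorem adj_cases {u v : Vtx φ} (h : Adj u v) :
    (u = par d v ∧ Dep d u + 1 = Dep d v) ∨ (v = par d u ∧ Dep d v + 1 = Dep d u) := by
  obtain ⟨e, i, hu, hv⟩ := h
  obtain ⟨i₀, hD, hroot, hE, hpar⟩ := edge_classify d e
  by_cases hii : i = i₀
  · subst hii
    left
    exact ⟨by rw [hu, hv, hpar], by rw [hu, hv, hD]⟩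
  · have hii' : i = !i₀ := by cases i <;> cases i₀ <;> simp_all
    subst hii'
    right
    rw [Bool.not_not] at hv
    exact ⟨by rw [hu, hv, hpar], by rw [hu, hv, hD]⟩

theorem vtx_eq_deep (v : Vtx φ) (hv : v ≠ rootV φ) (i₀ : Bool)
    (hD : Dep d (ends i₀ (edgeDown d v)) + 1 = Dep d (ends (!i₀) (edgeDown d v))) :
    v = ends (!i₀) (edgeDown d v) := by
  by_cases h1 : v.1 = !i₀
  · conv_lhs => rw [← ends_edgeDown_self d v]
    rw [h1]
  · have h1' : v.1 = i₀ := by cases hb : v.1 <;> cases hb0 : i₀ <;> simp_all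
    have hpv : par d v = ends (!i₀) (edgeDown d v) := by rw [par, if_neg hv, h1']
    have hps := par_spec d v hv
    rw [hpv] at hps
    have hveq : v = ends i₀ (edgeDown d v) := by
      conv_lhs => rw [← ends_edgeDown_self d v]
      rw [h1']
    rw [← hveq] at hD
    omega

theorem edgeDown_inj {v v' : Vtx φ} (hv : v ≠ rootV φ) (hv' : v' ≠ rootV φ)
    (h : edgeDown d v = edgeDown d v') : v = v' := by
  obtain ⟨i₀, hD, _, _, _⟩ := edge_classify d (edgeDown d v)
  have e1 := vtx_eq_deep d v hv i₀ hD
  have hD' := hD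
  rw [h] at hD'
  have e2 := vtx_eq_deep d v' hv' i₀ hD'
  rw [e1, e2, h]

/-! ### Ancestors -/

noncomputable def Anc (v : Vtx φ) : Set (Vtx φ) := Set.range (fun k => (par d)^[k] v)

theorem mem_Anc_self (v : Vtx φ) : v ∈ Anc d v := ⟨0, rfl⟩

theorem par_mem_Anc {v u : Vtx φ} (h : u ∈ Anc d v) : par d u ∈ Anc d v := by
  obtain ⟨k, rfl⟩ := h
  refine ⟨k + 1, ?_⟩
  show (par d)^[k + 1] v = par d ((par d)^[k] v)
  rw [Function.iterate_succ_apply']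

theorem iterate_mem_Anc (v : Vtx φ) (k : ℕ) : (par d)^[k] v ∈ Anc d v := ⟨k, rfl⟩

theorem par_iterate_root (k : ℕ) : (par d)^[k] (rootV φ) = rootV φ :=
  Function.iterate_fixed (par_root d) k

theorem eq_root_of_Dep (v : Vtx φ) (h : Dep d v = 0) : v = rootV φ := by
  rw [Dep] at h
  have hlen : (tau d v).toList.length = 0 := by omega
  have hep : eparN v.1 (tau d v).toList.length = 0 := by omega
  by_cases hb : v.1 = true
  · exact eq_root d v hb (List.length_eq_zero_iff.1 hlen)
  · rw [hlen] at hep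
    simp [eparN, hb] at hep

theorem ne_root_of_Dep {v : Vtx φ} (h : 0 < Dep d v) : v ≠ rootV φ := by
  intro hc
  rw [hc, Dep_root] at h
  omega

theorem Dep_par_iterate (v : Vtx φ) (k : ℕ) (hk : k ≤ Dep d v) :
    Dep d ((par d)^[k] v) = Dep d v - k := by
  induction k with
  | zero => simp
  | succ n ih =>
    have hn : n ≤ Dep d v := by omega
    have h1 : 0 < Dep d ((par d)^[n] v) := by rw [ih hn]; omega
    have h2 := par_spec d _ (ne_root_of_Dep d h1)
    rw [Function.iterate_succ_apply', ih hn] at *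
    omega

theorem par_iterate_depth (v : Vtx φ) : (par d)^[Dep d v] v = rootV φ := by
  apply eq_root_of_Dep
  rw [Dep_par_iterate d v (Dep d v) le_rfl]
  omega

theorem par_iterate_ge (v : Vtx φ) (k : ℕ) (hk : Dep d v ≤ k) :
    (par d)^[k] v = rootV φ := by
  have : k = (k - Dep d v) + Dep d v := by omega
  rw [this, Function.iterate_add_apply, par_iterate_depth, par_iterate_root]

theorem root_mem_Anc (v : Vtx φ) : rootV φ ∈ Anc d v :=
  ⟨Dep d v, par_iterate_depth d v⟩

theorem Anc_finite (v : Vtx φ) : (Anc d v).Finite := by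
  apply ((Set.finite_Iic (Dep d v)).image (fun k => (par d)^[k] v)).subset
  rintro _ ⟨k, rfl⟩
  by_cases hk : k ≤ Dep d v
  · exact ⟨k, Set.mem_Iic.2 hk, rfl⟩
  · refine ⟨Dep d v, Set.mem_Iic.2 le_rfl, ?_⟩
    show (par d)^[Dep d v] v = (par d)^[k] v
    rw [par_iterate_depth, par_iterate_ge d v k (by omega)]

/-! ### Geodesic chains -/

theorem chain_mem (N : ℕ) (a : ℕ → Vtx φ)
    (hadj : ∀ k, k < N → Adj (a k) (a (k + 1)))
    (hinj : ∀ j k, j ≤ N → k ≤ N → a j = a k → j = k) :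
    ∀ k, k ≤ N → a k ∈ Anc d (a 0) ∪ Anc d (a N) := by
  intro k hk
  by_cases hdown : ∀ j, j < k → a (j + 1) = par d (a j)
  · left
    have key : ∀ m, m ≤ k → a m = (par d)^[m] (a 0) := by
      intro m
      induction m with
      | zero => intro _; simp
      | succ n ih =>
        intro h
        rw [Function.iterate_succ_apply', ← ih (by omega), hdown n (by omega)]
    rw [key k le_rfl]
    exact iterate_mem_Anc d _ k
  · right
    push_neg at hdown
    obtain ⟨j, hjk, hne⟩ := hdown
    have hjN : j < N := by omega
    have hup0 : a j = par d (a (j + 1)) := by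
      rcases adj_cases d (hadj j hjN) with h | h
      · exact h.1
      · exact absurd h.1 hne
    have hup : ∀ m, j ≤ m → m < N → a m = par d (a (m + 1)) := by
      intro m
      induction m with
      | zero =>
        intro hm _
        have : j = 0 := by omega
        subst this
        exact hup0
      | succ n ih =>
        intro hm hmN
        by_cases hj : j = n + 1
        · subst hj
          exact hup0
        · have hjn : j ≤ n := by omega
          have hprev := ih hjn (by omega)
          rcases adj_cases d (hadj (n + 1) hmN) with h | h
          · exact h.1
          · exfalso
            have : a n = a (n + 2) := by rw [hprev, h.1]
            have := hinj n (n + 2) (by omega) (by omega) this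
            omega
    have hback : ∀ t m, m ≤ N → j ≤ m → N - m = t → a m = (par d)^[t] (a N) := by
      intro t
      induction t with
      | zero =>
        intro m h1 _ h3
        have : m = N := by omega
        subst this
        simp
      | succ n ih =>
        intro m h1 h2 h3
        have hmN : m < N := by omega
        rw [hup m h2 hmN, ih (m + 1) (by omega) (by omega) (by omega)]
        exact (Function.iterate_succ_apply' (par d) n (a N)).symm
    rw [hback (N - k) k hk (by omega) rfl]
    exact iterate_mem_Anc d _ _

theorem smul_mem_anc (g : PushoutI φ) (v u : Vtx φ) (hu : u ∈ Anc d v) :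
    g • u ∈ Anc d (g • v) ∪ Anc d (g • rootV φ) := by
  obtain ⟨k0, rfl⟩ := hu
  by_cases hk0 : k0 ≤ Dep d v
  · have := chain_mem d (Dep d v) (fun k => g • (par d)^[k] v)
      (fun k hk => by
        have h1 : 0 < Dep d ((par d)^[k] v) := by
          rw [Dep_par_iterate d v k (by omega)]; omega
        show Adj (g • (par d)^[k] v) (g • (par d)^[k + 1] v)
        rw [Function.iterate_succ_apply']
        exact ((adj_par d _ (ne_root_of_Dep d h1)).symm).smul g)
      (fun j k hj hk h => by
        have h2 := MulAction.injective (β := Vtx φ) g h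
        have hj2 := Dep_par_iterate d v j hj
        have hk2 := Dep_par_iterate d v k hk
        rw [h2] at hj2
        omega)
      k0 hk0
    simpa [par_iterate_depth] using this
  · show g • (par d)^[k0] v ∈ _
    rw [par_iterate_ge d v k0 (by omega)]
    exact Or.inr (mem_Anc_self d _)


/-! ### Sylow endgame -/

open scoped Pointwise in
theorem sylow_step {C : Type*} {G : Bool → Type*} [Group C] [Fintype C]
    [∀ i, Group (G i)] [∀ i, Fintype (G i)] (p : ℕ) [hp : Fact p.Prime]
    (φ : ∀ i, C →* G i) (hφ : ∀ i, Function.Injective ⇑(φ i)) (hpC : IsPGroup p C)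
    (hind : ∀ i, ¬ p ∣ (φ i).range.index) (P : Subgroup (PushoutI φ))
    (hP : IsPGroup p ↥P) (i : Bool) (x : PushoutI φ)
    (hx : ∀ h ∈ P, x⁻¹ * h * x ∈ R φ i) :
    ∃ g : PushoutI φ, (fun y => g⁻¹ * y * g) '' P ⊆ Set.range (base φ) := by
  -- the conjugated subgroup inside the range of `of i`
  set P' : Subgroup (PushoutI φ) := Subgroup.map (MulAut.conj x⁻¹).toMonoidHom P with hP'
  have hP'mem : ∀ h ∈ P, x⁻¹ * h * x ∈ P' := by
    intro h hh
    refine ⟨h, hh, ?_⟩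
    show x⁻¹ * h * x⁻¹⁻¹ = x⁻¹ * h * x
    rw [inv_inv]
  have hP'le : P' ≤ R φ i := by
    rintro _ ⟨h, hh, rfl⟩
    have := hx h hh
    simpa [inv_inv] using this
  set Q : Subgroup (G i) := P'.comap (of (φ := φ) i) with hQdef
  have hQmap : Q.map (of (φ := φ) i) = P' := by
    rw [hQdef, Subgroup.map_comap_eq, inf_eq_right.2 hP'le]
  have hP'grp : IsPGroup p ↥P' := hP.map _
  have hQgrp : IsPGroup p ↥Q := by
    have e1 : ↥Q ≃* ↥P' :=
      (Subgroup.equivMapOfInjective Q (of (φ := φ) i) (of_injective hφ i)).trans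
        (MulEquiv.subgroupCongr hQmap)
    exact hP'grp.of_equiv e1.symm
  -- `S0` is a Sylow subgroup of `G i`
  set S0 : Subgroup (G i) := (φ i).range with hS0
  have hS0p : IsPGroup p ↥S0 := hpC.of_equiv (MonoidHom.ofInjective (hφ i))
  have hmax : ∀ {Q' : Subgroup (G i)}, IsPGroup p ↥Q' → S0 ≤ Q' → Q' = S0 := by
    intro Q' hQ' hle
    have h1 : S0.relIndex Q' * Q'.index = S0.index := Subgroup.relIndex_mul_index hle
    have h2 : S0.relIndex Q' ∣ Nat.card ↥Q' := Subgroup.index_dvd_card _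
    obtain ⟨n, hn⟩ := IsPGroup.iff_card.1 hQ'
    rw [hn] at h2
    obtain ⟨k, hk, hrel⟩ := (Nat.dvd_prime_pow hp.out).1 h2
    rcases k with _ | k
    · have : Q' ≤ S0 := Subgroup.relIndex_eq_one.1 (by rw [hrel, pow_zero])
      exact le_antisymm this hle
    · exfalso
      apply hind i
      rw [← hS0, ← h1, hrel]
      exact Dvd.dvd.mul_right (dvd_pow_self p (Nat.succ_ne_zero k)) _
  let S0sy : Sylow p (G i) := ⟨S0, hS0p, hmax⟩
  obtain ⟨Sy, hQSy⟩ := IsPGroup.exists_le_sylow hQgrp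
  obtain ⟨g, hg⟩ := MulAction.exists_smul_eq (G i) S0sy Sy
  have hsub : (Sy : Subgroup (G i)) = MulAut.conj g • (S0sy : Subgroup (G i)) := by
    rw [← hg, Sylow.smul_def]
    rfl
  have hm : ∀ q ∈ Q, g⁻¹ * q * g ∈ S0 := by
    intro q hq
    have h3 : q ∈ MulAut.conj g • (S0sy : Subgroup (G i)) := by
      rw [← hsub]
      exact hQSy hq
    rw [Subgroup.mem_pointwise_smul_iff_inv_smul_mem] at h3
    rw [← map_inv] at h3
    simpa [MulAut.conj_apply, mul_assoc] using h3
  refine ⟨x * of (φ := φ) i g, ?_⟩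
  rintro _ ⟨h, hh, rfl⟩
  obtain ⟨q, hq⟩ : x⁻¹ * h * x ∈ (of (φ := φ) i).range := hP'le (hP'mem h hh)
  have hqQ : q ∈ Q := by
    show of (φ := φ) i q ∈ P'
    rw [hq]
    exact hP'mem h hh
  obtain ⟨c, hc⟩ : g⁻¹ * q * g ∈ (φ i).range := hm q hqQ
  refine ⟨c, ?_⟩
  show base φ c = (x * of (φ := φ) i g)⁻¹ * h * (x * of (φ := φ) i g)
  rw [← of_apply_eq_base φ i, hc, mul_inv_rev]
  rw [map_mul, map_mul, map_inv, hq]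
  simp [mul_assoc]


/-! ### Existence of a fixed vertex or edge -/

theorem ends_edgeDown_cases (v : Vtx φ) (hv : v ≠ rootV φ) (b : Bool) :
    ends b (edgeDown d v) = v ∨ ends b (edgeDown d v) = par d v := by
  by_cases hb : b = v.1
  · left
    rw [hb, ends_edgeDown_self]
  · right
    have hb' : b = !v.1 := by cases b <;> cases hbv : v.1 <;> simp_all
    rw [hb', par, if_neg hv]

theorem conj_mem_of_fixed {H : Subgroup (PushoutI φ)} {x g : PushoutI φ}
    (h : g • ((x : PushoutI φ) : PushoutI φ ⧸ H) = (x : PushoutI φ ⧸ H)) :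
    x⁻¹ * g⁻¹ * x ∈ H := by
  rw [show g • ((x : PushoutI φ) : PushoutI φ ⧸ H) = ((g * x : PushoutI φ) : PushoutI φ ⧸ H)
    from rfl, QuotientGroup.eq] at h
  simpa [mul_inv_rev, mul_assoc] using h

include d in
theorem exists_fixed {p : ℕ} [hp : Fact p.Prime]
    (P : Subgroup (PushoutI φ)) [hfin : Finite ↥P] (hP : IsPGroup p ↥P) :
    (∃ x : PushoutI φ, ∀ h ∈ P, x⁻¹ * h * x ∈ K φ) ∨
    (∃ (i : Bool) (x : PushoutI φ), ∀ h ∈ P, x⁻¹ * h * x ∈ R φ i) := by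
  classical
  haveI : Finite ↥(P : Set (PushoutI φ)) := hfin
  set Tset : Set (Vtx φ) := ⋃ h ∈ (P : Set (PushoutI φ)), Anc d (h • rootV φ) with hT
  have hTfin : Tset.Finite := Set.Finite.biUnion (Set.toFinite _) (fun h _ => Anc_finite d _)
  have hTroot : rootV φ ∈ Tset :=
    Set.mem_biUnion P.one_mem (by rw [show (1 : PushoutI φ) • rootV φ = rootV φ from one_smul _ _]; exact mem_Anc_self d _)
  have hTmem : ∀ v ∈ Tset, ∃ h ∈ (P : Set (PushoutI φ)), v ∈ Anc d (h • rootV φ) := by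
    intro v hv
    rw [hT, Set.mem_iUnion₂] at hv
    obtain ⟨h, hh, hmem⟩ := hv
    exact ⟨h, hh, hmem⟩
  have hTinv : ∀ g ∈ P, ∀ v ∈ Tset, g • v ∈ Tset := by
    intro g hg v hv
    obtain ⟨h, hh, hvmem⟩ := hTmem v hv
    rcases smul_mem_anc d g _ v hvmem with h1 | h1
    · rw [show g • h • rootV φ = (g * h) • rootV φ from (mul_smul _ _ _).symm] at h1
      exact Set.mem_biUnion (P.mul_mem hg hh) h1
    · exact Set.mem_biUnion hg h1
  have hTpar : ∀ v ∈ Tset, par d v ∈ Tset := by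
    intro v hv
    obtain ⟨h, hh, hvmem⟩ := hTmem v hv
    exact Set.mem_biUnion hh (par_mem_Anc d hvmem)
  set Eset : Set (PushoutI φ ⧸ K φ) :=
    {e | ends true e ∈ Tset ∧ ends false e ∈ Tset} with hE
  have hEmem : ∀ e ∈ Eset, ∀ b, ends (φ := φ) b e ∈ Tset := by
    intro e he b
    cases b
    · exact he.2
    · exact he.1
  have hEinv : ∀ g ∈ P, ∀ e ∈ Eset, g • e ∈ Eset := by
    intro g hg e he
    constructor <;> rw [ends_smul]
    · exact hTinv g hg _ he.1
    · exact hTinv g hg _ he.2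
  have hEfin : Eset.Finite := by
    apply (hTfin.image (edgeDown d)).subset
    intro e he
    obtain ⟨i₀, hD, hroot', hEd, hpar'⟩ := edge_classify d e
    exact ⟨ends (!i₀) e, hEmem e he (!i₀), hEd⟩
  -- the bijection between non-root vertices and edges of the hull
  have hinjOn : Set.InjOn (edgeDown d) (Tset \ {rootV φ}) := by
    intro v hv v' hv' h
    exact edgeDown_inj d (by simpa using hv.2) (by simpa using hv'.2) h
  have himage : edgeDown d '' (Tset \ {rootV φ}) = Eset := by
    apply subset_antisymm
    · rintro _ ⟨v, ⟨hvT, hvr⟩, rfl⟩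
      have hvne : v ≠ rootV φ := by simpa using hvr
      constructor
      · rcases ends_edgeDown_cases d v hvne true with h1 | h1 <;> rw [h1]
        · exact hvT
        · exact hTpar v hvT
      · rcases ends_edgeDown_cases d v hvne false with h1 | h1 <;> rw [h1]
        · exact hvT
        · exact hTpar v hvT
    · intro e he
      obtain ⟨i₀, hD, hroot', hEd, hpar'⟩ := edge_classify d e
      exact ⟨ends (!i₀) e, ⟨hEmem e he (!i₀), by simpa using hroot'⟩, hEd⟩
  have hcard : Tset.ncard = Eset.ncard + 1 := by
    rw [← Set.ncard_diff_singleton_add_one hTroot hTfin, ← himage,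
      Set.ncard_image_of_injOn hinjOn]
  -- the p-group action on the hull
  haveI hTfin' : Finite ↥Tset := hTfin.to_subtype
  haveI hEfin' : Finite ↥Eset := hEfin.to_subtype
  letI actT : MulAction ↥P ↥Tset :=
    { smul := fun g v => ⟨(g : PushoutI φ) • (v : Vtx φ), hTinv g g.2 v v.2⟩
      one_smul := fun v => Subtype.ext (one_smul _ _)
      mul_smul := fun a b v => Subtype.ext (mul_smul (a : PushoutI φ) (b : PushoutI φ) (v : Vtx φ)) }
  letI actE : MulAction ↥P ↥Eset :=
    { smul := fun g e => ⟨(g : PushoutI φ) • (e : PushoutI φ ⧸ K φ), hEinv g g.2 e e.2⟩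
      one_smul := fun e => Subtype.ext (one_smul _ _)
      mul_smul := fun a b e => Subtype.ext
        (mul_smul (a : PushoutI φ) (b : PushoutI φ) (e : PushoutI φ ⧸ K φ)) }
  have hmodT := hP.card_modEq_card_fixedPoints (α := ↥Tset)
  have hmodE := hP.card_modEq_card_fixedPoints (α := ↥Eset)
  by_cases hfixE : (MulAction.fixedPoints ↥P ↥Eset).Nonempty
  · -- a fixed edge
    left
    obtain ⟨⟨e, heE⟩, hefix⟩ := hfixE
    rw [MulAction.mem_fixedPoints] at hefix
    obtain ⟨x, rfl⟩ := QuotientGroup.mk_surjective e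
    refine ⟨x, fun h hh => ?_⟩
    have h1 := hefix ⟨h⁻¹, P.inv_mem hh⟩
    rw [Subtype.ext_iff] at h1
    have h2 := conj_mem_of_fixed (H := K φ) (x := x) (g := h⁻¹) h1
    rwa [inv_inv] at h2
  · by_cases hfixT : (MulAction.fixedPoints ↥P ↥Tset).Nonempty
    · -- a fixed vertex
      right
      obtain ⟨⟨v, hvT⟩, hvfix⟩ := hfixT
      rw [MulAction.mem_fixedPoints] at hvfix
      obtain ⟨i, q⟩ := v
      obtain ⟨x, rfl⟩ := QuotientGroup.mk_surjective q
      refine ⟨i, x, fun h hh => ?_⟩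
      have h1 := hvfix ⟨h⁻¹, P.inv_mem hh⟩
      rw [Subtype.ext_iff] at h1
      have h2 : h⁻¹ • ((x : PushoutI φ) : PushoutI φ ⧸ R φ i) = (x : PushoutI φ ⧸ R φ i) := by
        have h3 : (⟨i, h⁻¹ • ((x : PushoutI φ) : PushoutI φ ⧸ R φ i)⟩ : Vtx φ) = ⟨i, (x : PushoutI φ ⧸ R φ i)⟩ := h1
        simpa [Sigma.mk.inj_iff] using h3
      have h4 := conj_mem_of_fixed (H := R φ i) (x := x) (g := h⁻¹) h2
      rwa [inv_inv] at h4
    · -- impossible: counting mod p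
      exfalso
      have hTempty : MulAction.fixedPoints ↥P ↥Tset = ∅ :=
        Set.not_nonempty_iff_eq_empty.1 hfixT
      have hEempty : MulAction.fixedPoints ↥P ↥Eset = ∅ :=
        Set.not_nonempty_iff_eq_empty.1 hfixE
      have hfT : Nat.card ↑(MulAction.fixedPoints ↥P ↥Tset) = 0 := by
        haveI := Set.isEmpty_coe_sort.2 hTempty
        exact Nat.card_of_isEmpty
      have hfE : Nat.card ↑(MulAction.fixedPoints ↥P ↥Eset) = 0 := by
        haveI := Set.isEmpty_coe_sort.2 hEempty
        exact Nat.card_of_isEmpty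
      rw [hfT, Nat.card_coe_set_eq] at hmodT
      rw [hfE, Nat.card_coe_set_eq] at hmodE
      rw [hcard] at hmodT
      have hE1 : Eset.ncard + 1 ≡ 0 + 1 [MOD p] := Nat.ModEq.add_right 1 hmodE
      have h3 : (0 + 1 : ℕ) ≡ 0 [MOD p] := hE1.symm.trans hmodT
      have h4 : p ∣ 1 := by
        have := (Nat.modEq_iff_dvd' (by omega)).1 h3.symm
        simpa using this
      have hp2 : 2 ≤ p := hp.out.two_le
      have := Nat.le_of_dvd one_pos h4
      omega

end Stmt4Aux

open Monoid PushoutI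

/-- Let `G = A *_S B` be an amalgamated free product of finite groups
`A = 𝒢 true`, `B = 𝒢 false` over a common Sylow `p`-subgroup `S = C` (so `C` is a
`p`-group embedded with `p'`-index in both `A` and `B`).  Then the image of `S` in `G` is
a Sylow `p`-subgroup of `G`: every finite `p`-subgroup of `G` is conjugate to a subgroup
of it. -/
theorem stmt_4 {C : Type*} {G : Bool → Type*} [Group C] [Fintype C]
    [∀ i, Group (G i)] [∀ i, Fintype (G i)]
    (p : ℕ) [Fact p.Prime]
    (φ : ∀ i, C →* G i) (hφ : ∀ i, Function.Injective (φ i))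
    (hpC : IsPGroup p C) (hind : ∀ i, ¬ p ∣ (φ i).range.index)
    (P : Subgroup (PushoutI φ)) (hfin : Finite P) (hP : IsPGroup p P) :
    ∃ g : PushoutI φ,
      (fun x => g⁻¹ * x * g) '' P ⊆ Set.range (base φ) := by
  letI := fun i => Classical.decEq (G i)
  obtain ⟨d⟩ := NormalWord.transversal_nonempty φ hφ
  haveI := hfin
  rcases Stmt4Aux.exists_fixed d P hP with ⟨x, hx⟩ | ⟨i, x, hx⟩
  · refine ⟨x, ?_⟩
    rintro _ ⟨h, hh, rfl⟩
    exact hx h hh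
  · exact Stmt4Aux.sylow_step p φ hφ hpC hind P hP i x hx
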